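/- Let (k_β)_{β < λ} be a chain of fields indexed by ordinals below a regular cardinal λ with k_β ⊆ k_{β'} of infinite degree for β < β', and let (V_β, ν) be a 0-grounded system: each V_β a k_β-vector space, k-linear transitions ν_{β'β}, with V_β = k_β · ν_{β0}(V_0) for all β. If dim_{k_0} V_0 < λ, then there exists α < λ such that ν_{β'β} is injective for all α ≤ β ≤ β' < λ (the system is 'trim'). -/

import Mathlib

set_option maxHeartbeats 2000000
set_option synthInstance.maxHeartbeats 1000000

noncomputable def jmapF {K : Type} [Field K] {ι : Type} (k : Subfield K) : (ι →₀ k) →+ (ι →₀ K) :=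
  Finsupp.mapRange.addMonoidHom k.subtype.toAddMonoidHom

theorem jmapF_apply {K : Type} [Field K] {ι : Type} (k : Subfield K) (g : ι →₀ k) (i : ι) :
    jmapF k g i = (g i : K) := by
  simp [jmapF, Finsupp.mapRange.addMonoidHom, Finsupp.mapRange_apply]
  exact Finsupp.mapRange_apply

theorem jmapF_single {K : Type} [Field K] {ι : Type} (k : Subfield K) (i : ι) (c : k) :
    jmapF k (Finsupp.single i c) = Finsupp.single i (c : K) := by
  simp [jmapF, Finsupp.mapRange.addMonoidHom]
  exact Finsupp.mapRange_single

theorem descent {K : Type} [Field K] {ι : Type} (k : Subfield K)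
    (N : Submodule k (ι →₀ k)) (g : ι →₀ k)
    (hg : jmapF k g ∈ Submodule.span K (jmapF k '' (N : Set (ι →₀ k)))) : g ∈ N := by
  by_contra hgN
  have hq : N.mkQ g ≠ 0 := by
    simpa [Submodule.Quotient.mk_eq_zero] using hgN
  obtain ⟨φ, hφ⟩ : ∃ φ : Module.Dual k ((ι →₀ k) ⧸ N), φ (N.mkQ g) ≠ 0 := by
    by_contra h
    push_neg at h
    exact hq ((Module.forall_dual_apply_eq_zero_iff k _).1 h)
  set l : (ι →₀ k) →ₗ[k] k := φ.comp N.mkQ with hl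
  set Λ : (ι →₀ K) →ₗ[K] K :=
    Finsupp.linearCombination K (fun i => ((l (Finsupp.single i 1) : k) : K)) with hΛ
  have key : ∀ h : ι →₀ k, Λ (jmapF k h) = (l h : K) := by
    intro h
    induction h using Finsupp.induction_linear with
    | zero => simp
    | add a b ha hb => rw [map_add, map_add, ha, hb, map_add]; push_cast; ring
    | single i c =>
        rw [jmapF_single, hΛ, Finsupp.linearCombination_single]
        have h2 : Finsupp.single i c = c • Finsupp.single i (1 : k) := by
          rw [Finsupp.smul_single, smul_eq_mul, mul_one]
        rw [h2, map_smul, smul_eq_mul, smul_eq_mul]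
        push_cast
        ring
  have hker : Submodule.span K (jmapF k '' (N : Set (ι →₀ k))) ≤ LinearMap.ker Λ := by
    rw [Submodule.span_le]
    rintro _ ⟨n, hn, rfl⟩
    simp only [SetLike.mem_coe, LinearMap.mem_ker, key]
    have : l n = 0 := by
      simp [hl, LinearMap.comp_apply, (Submodule.Quotient.mk_eq_zero N).2 hn]
    simp [this]
  have h0 := hker hg
  rw [LinearMap.mem_ker, key] at h0
  exact hφ (by exact_mod_cast h0)

theorem indep_of_flag {K M : Type*} [Field K] [AddCommGroup M] [Module K M]
    {ι : Type*} [LinearOrder ι] (A : ι → Submodule K M) (v : ι → M)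
    (hmem : ∀ i j, i < j → v i ∈ A j) (hnot : ∀ i, v i ∉ A i) :
    LinearIndependent K v := by
  classical
  rw [linearIndependent_iff']
  intro s
  induction s using Finset.induction_on_max with
  | empty => intro g _ i hi; exact absurd hi (Finset.notMem_empty i)
  | insert a s ha ih =>
      intro g hsum i hi
      have hga : g a = 0 := by
        by_contra hga
        rw [Finset.sum_insert (fun h => lt_irrefl a (ha a h))] at hsum
        have hmem2 : g a • v a ∈ A a := by
          have : g a • v a = -∑ x ∈ s, g x • v x := by
            rw [eq_neg_iff_add_eq_zero]; rw [add_comm] at hsum ⊢; exact hsum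
          rw [this]
          exact neg_mem (Submodule.sum_mem _ (fun x hx => Submodule.smul_mem _ _ (hmem x a (ha x hx))))
        have : v a ∈ A a := by
          have := Submodule.smul_mem (A a) (g a)⁻¹ hmem2
          rwa [smul_smul, inv_mul_cancel₀ hga, one_smul] at this
        exact hnot a this
      rcases Finset.mem_insert.1 hi with rfl | hi'
      · exact hga
      · apply ih g _ i hi'
        rw [Finset.sum_insert (fun h => lt_irrefl a (ha a h)), hga, zero_smul, zero_add] at hsum
        exact hsum

noncomputable def iterFun (g : Ordinal.{0} → Ordinal.{0}) : Ordinal.{0} → Ordinal.{0} :=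
  Ordinal.lt_wf.fix (fun ξ IH => g (Ordinal.bsup ξ (fun η h => IH η h + 1)))

theorem iterFun_eq (g : Ordinal.{0} → Ordinal.{0}) (ξ : Ordinal.{0}) :
    iterFun g ξ = g (Ordinal.bsup ξ (fun η _ => iterFun g η + 1)) := by
  rw [iterFun, WellFounded.fix_eq]

/-- let `(k_β)_{β<λ}` be a chain of subfields of an ambient field `K`,
indexed by ordinals below a regular cardinal `λ`, with `k_β ⊆ k_γ` of infinite degree for
`β < γ`, and `(V_β, ν)` a 0-grounded system: each `V_β` a `k_β`-vector space, additive
transition maps `ν_{γβ}` that are `k_β`-semilinear (i.e. `k_β`-linear via the inclusion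
`k_β ⊆ k_γ`), satisfying the cocycle condition, with `V_β = k_β · ν_{β0}(V_0)` for all
`β < λ`.  If `dim_{k_0} V_0 < λ` then the system is trim: there is `α < λ` with `ν_{γβ}`
injective for all `α ≤ β ≤ γ < λ`. -/
theorem grounded_system_is_trim
    (K : Type) [Field K]
    (lam : Cardinal.{0}) (hreg : lam.IsRegular)
    (k : Ordinal.{0} → Subfield K)
    (hmono : ∀ {β γ : Ordinal.{0}}, β ≤ γ → k β ≤ k γ)
    -- the extensions `k β ⊆ k γ` have infinite degree for `β < γ < λ`:
    (hdeg : ∀ (β γ : Ordinal.{0}), β < γ → γ < lam.ord →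
      ∀ n : ℕ, ∃ x : Fin n → K, (∀ i, x i ∈ k γ) ∧ LinearIndependent (k β) x)
    (V : Ordinal.{0} → Type) [∀ β, AddCommGroup (V β)] [∀ β, Module (k β) (V β)]
    (ν : ∀ β γ : Ordinal.{0}, β ≤ γ → (V β →+ V γ))
    (hcomp : ∀ (β γ δ : Ordinal.{0}) (h₁ : β ≤ γ) (h₂ : γ ≤ δ),
      (ν γ δ h₂).comp (ν β γ h₁) = ν β δ (h₁.trans h₂))
    (hsemi : ∀ (β γ : Ordinal.{0}) (h : β ≤ γ) (a : k β) (v : V β),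
      ν β γ h (a • v) = (Subfield.inclusion (hmono h) a) • ν β γ h v)
    -- 0-groundedness: `V_β` is spanned over `k_β` by the image of `V_0`
    (hground : ∀ (β : Ordinal.{0}), β < lam.ord →
      Submodule.span (k β) (Set.range (ν 0 β (zero_le (a := β)))) = ⊤)
    (hdim : Module.rank (k 0) (V 0) < lam) :
    ∃ α : Ordinal.{0}, α < lam.ord ∧
      ∀ (β γ : Ordinal.{0}) (h : β ≤ γ), α ≤ β → γ < lam.ord →
        Function.Injective (ν β γ h) := by
  classical
  set o := lam.ord with ho
  have holim : Order.IsSuccLimit o := Cardinal.isSuccLimit_ord hreg.aleph0_le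
  set ι := Module.Basis.ofVectorSpaceIndex (k 0) (V 0) with hι
  set b : Module.Basis ι (k 0) (V 0) := Module.Basis.ofVectorSpace (k 0) (V 0) with hb
  have hcard : Cardinal.mk ι < lam := by rw [b.mk_eq_rank'']; exact hdim
  -- the relation spaces
  set T : ∀ β : Ordinal.{0}, (ι →₀ k β) →ₗ[k β] V β :=
    fun β => Finsupp.linearCombination (k β) (fun i => ν 0 β (zero_le (a := β)) (b i)) with hT
  have hcompat : ∀ (β γ : Ordinal.{0}) (h : β ≤ γ) (i : ι),
      ν β γ h (ν 0 β (zero_le (a := β)) (b i)) = ν 0 γ (zero_le (a := γ)) (b i) := by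
    intro β γ h i
    exact DFunLike.congr_fun (hcomp 0 β γ (zero_le (a := β)) h) (b i)
  have hTmap : ∀ (β γ : Ordinal.{0}) (h : β ≤ γ) (g : ι →₀ k β),
      T γ (Finsupp.mapRange (Subfield.inclusion (hmono h)) (map_zero (Subfield.inclusion (hmono h))) g)
        = ν β γ h (T β g) := by
    intro β γ h g
    rw [hT]
    rw [Finsupp.linearCombination_apply, Finsupp.linearCombination_apply]
    rw [Finsupp.sum_mapRange_index (by intro i; simp)]
    rw [map_finsuppSum]
    refine Finsupp.sum_congr (fun i _ => ?_)
    rw [hsemi, hcompat]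
  have hjcomp : ∀ (β γ : Ordinal.{0}) (h : β ≤ γ) (g : ι →₀ k β),
      jmapF (k γ) (Finsupp.mapRange (Subfield.inclusion (hmono h)) (map_zero (Subfield.inclusion (hmono h))) g)
        = jmapF (k β) g := by
    intro β γ h g
    ext i
    rw [jmapF_apply, jmapF_apply, Finsupp.mapRange_apply]
    rfl
  set W : Ordinal.{0} → Submodule K (ι →₀ K) :=
    fun β => Submodule.span K (jmapF (k β) '' (LinearMap.ker (T β) : Set (ι →₀ k β))) with hW
  have hWmono : ∀ β γ : Ordinal.{0}, β ≤ γ → W β ≤ W γ := by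
    intro β γ h
    apply Submodule.span_mono
    rintro _ ⟨g, hg, rfl⟩
    refine ⟨Finsupp.mapRange (Subfield.inclusion (hmono h)) (map_zero (Subfield.inclusion (hmono h))) g, ?_, hjcomp β γ h g⟩
    simp only [SetLike.mem_coe, LinearMap.mem_ker] at hg ⊢
    rw [hTmap β γ h, hg, map_zero]
  have hTsurj : ∀ β : Ordinal.{0}, β < o → Function.Surjective (T β) := by
    intro β hβ
    rw [← LinearMap.range_eq_top, hT, Finsupp.range_linearCombination]
    rw [eq_top_iff, ← hground β hβ, Submodule.span_le]
    rintro _ ⟨y, rfl⟩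
    have hy : y = (b.repr y).sum fun i c => c • b i := by
      conv_lhs => rw [← b.linearCombination_repr y]
      rw [Finsupp.linearCombination_apply]
    rw [hy, map_finsuppSum]
    apply Submodule.sum_mem
    intro i _
    dsimp only
    rw [hsemi]
    exact Submodule.smul_mem _ _ (Submodule.subset_span ⟨i, rfl⟩)
  have hstrict : ∀ (β γ : Ordinal.{0}) (h : β ≤ γ), β < o →
      ∀ v : V β, v ≠ 0 → ν β γ h v = 0 → ∃ f, f ∈ W γ ∧ f ∉ W β := by
    intro β γ h hβ v hv hνv
    obtain ⟨g, hg⟩ := hTsurj β hβ v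
    refine ⟨jmapF (k β) g, ?_, ?_⟩
    · rw [← hjcomp β γ h g]
      apply Submodule.subset_span
      refine ⟨_, ?_, rfl⟩
      simp only [SetLike.mem_coe, LinearMap.mem_ker]
      rw [hTmap β γ h, hg, hνv]
    · intro hf
      have := descent (k β) (LinearMap.ker (T β)) g hf
      rw [LinearMap.mem_ker, hg] at this
      exact hv this
  by_contra hcon
  push_neg at hcon
  have step : ∀ α : Ordinal.{0}, α < o → ∃ γ, γ < o ∧ W α < W γ := by
    intro α hα
    obtain ⟨β, γ, h, hαβ, hγ, hninj⟩ := hcon α hα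
    rw [Function.not_injective_iff] at hninj
    obtain ⟨x, y, hxy, hne⟩ := hninj
    have hβ : β < o := lt_of_le_of_lt h hγ
    have hv : x - y ≠ 0 := sub_ne_zero.2 hne
    have hν : ν β γ h (x - y) = 0 := by rw [map_sub, sub_eq_zero]; exact hxy
    obtain ⟨f, hfγ, hfβ⟩ := hstrict β γ h hβ (x - y) hv hν
    refine ⟨γ, hγ, lt_of_le_not_ge (hWmono α γ (hαβ.trans h)) ?_⟩
    intro hle
    exact hfβ (hWmono α β hαβ (hle hfγ))
  set gfun : Ordinal.{0} → Ordinal.{0} :=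
    fun α => if hα : α < o then (step α hα).choose else 0 with hgfun
  have hgspec : ∀ α : Ordinal.{0}, α < o → gfun α < o ∧ W α < W (gfun α) := by
    intro α hα
    rw [hgfun]
    simp only [dif_pos hα]
    exact (step α hα).choose_spec
  set e := iterFun gfun with he
  set s : Ordinal.{0} → Ordinal.{0} := fun ξ => Ordinal.bsup ξ (fun η _ => e η + 1) with hs
  have hse : ∀ ξ : Ordinal.{0}, ξ < o → s ξ < o ∧ e ξ < o := by
    intro ξ
    induction ξ using Ordinal.induction with
    | h ξ IH =>
      intro hξ
      have hsξ : s ξ < o := by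
        rw [hs]
        apply Cardinal.bsup_lt_ord_of_isRegular hreg (Cardinal.lt_ord.1 hξ)
        intro η hη
        have := (IH η hη (hη.trans hξ)).2
        rw [Ordinal.add_one_eq_succ]
        exact holim.succ_lt this
      refine ⟨hsξ, ?_⟩
      rw [he, iterFun_eq]
      exact (hgspec _ hsξ).1
  have hes : ∀ ξ : Ordinal.{0}, ξ < o → W (s ξ) < W (e ξ) := by
    intro ξ hξ
    rw [he, iterFun_eq]
    exact (hgspec _ (hse ξ hξ).1).2
  have hpick : ∀ ξ : Ordinal.{0}, ξ < o → ∃ f, f ∈ W (e ξ) ∧ f ∉ W (s ξ) := by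
    intro ξ hξ
    obtain ⟨x, hx1, hx2⟩ := SetLike.exists_of_lt (hes ξ hξ)
    exact ⟨x, hx1, hx2⟩
  set τ := o.ToType with hτ
  set iso := Ordinal.ToType.mk (o := o) with hiso
  set vfun : τ → (ι →₀ K) := fun x => (hpick (iso.symm x) (iso.symm x).2).choose with hvfun
  set A : τ → Submodule K (ι →₀ K) := fun x => W (s (iso.symm x)) with hA
  have hindep : LinearIndependent K vfun := by
    apply indep_of_flag A
    · intro i j hij
      have h1 : (iso.symm i : Ordinal) < (iso.symm j : Ordinal) := by
        exact iso.symm.lt_iff_lt.2 hij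
      have hmem := (hpick (iso.symm i) (iso.symm i).2).choose_spec.1
      have hle : e (iso.symm i) ≤ s (iso.symm j) := by
        rw [hs]
        exact (le_self_add (b := (1 : Ordinal.{0}))).trans (Ordinal.le_bsup _ _ h1)
      exact hWmono _ _ hle hmem
    · intro i
      exact (hpick (iso.symm i) (iso.symm i).2).choose_spec.2
  have hle : lam ≤ Module.rank K (ι →₀ K) := by
    have := hindep.cardinal_le_rank
    rwa [Cardinal.mk_toType, ho, Cardinal.card_ord] at this
  rw [rank_finsupp_self'] at hle
  exact absurd (lt_of_le_of_lt hle hcard) (lt_irrefl lam)
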